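/- Let q₁ = 1/2 and let q₂ be a random variable taking values 0.7 and 0.3 each with probability 1/2, with P(Y=1 | q₂) = q₂. Define the truthful averaged forecast C_q := (q₁ + q₂)/2 and the modified adapted trace G₁ = 1/2, G₂ = 2q₂ − 1/2 with C_G := (G₁+G₂)/2 = q₂. Then E[(C_G − Y)²] = E[(q₂ − Y)²] < E[(C_q − Y)²], with the gap equal to 0.01. -/

import Mathlib

open MeasureTheory

lemma brier_piece {Ω : Type*} {m0 : MeasurableSpace Ω} (μ : Measure Ω) [IsProbabilityMeasure μ]
    (Y : Ω → ℝ) (hYint : Integrable Y μ) (hY01 : ∀ ω, Y ω = 0 ∨ Y ω = 1)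
    (S : Set Ω) (c : ℝ) :
    ∫ ω in S, (c - Y ω)^2 ∂μ
      = c^2 * (μ S).toReal + (1 - 2*c) * ∫ ω in S, Y ω ∂μ := by
  have h : ∀ ω, (c - Y ω)^2 = c^2 + (1 - 2*c) * Y ω := by
    intro ω; rcases hY01 ω with h | h <;> rw [h] <;> ring
  simp_rw [h]
  rw [integral_add (integrable_const _) ((hYint.const_mul _).integrableOn),
    integral_const, integral_const_mul]
  simp [mul_comm, Measure.real]

theorem avg_aggregator_truthful_trace_suboptimal
    {Ω : Type*} {m0 : MeasurableSpace Ω} (μ : Measure Ω) [IsProbabilityMeasure μ]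
    (Y q₂ : Ω → ℝ) (hY : Measurable Y) (hq₂ : Measurable q₂)
    (hY01 : ∀ ω, Y ω = 0 ∨ Y ω = 1)
    (hq₂vals : ∀ ω, q₂ ω = 0.7 ∨ q₂ ω = 0.3)
    (h07 : μ {ω | q₂ ω = 0.7} = 1/2)
    (h03 : μ {ω | q₂ ω = 0.3} = 1/2)
    -- P(Y = 1 | q₂) = q₂
    (hcond : μ[Y | MeasurableSpace.comap q₂ inferInstance] =ᵐ[μ] q₂) :
    (∫ ω, (q₂ ω - Y ω)^2 ∂μ) < (∫ ω, ((1/2 + q₂ ω)/2 - Y ω)^2 ∂μ)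
    ∧ (∫ ω, ((1/2 + q₂ ω)/2 - Y ω)^2 ∂μ) = (∫ ω, (q₂ ω - Y ω)^2 ∂μ) + 0.01 := by
  have hm : MeasurableSpace.comap q₂ inferInstance ≤ m0 := hq₂.comap_le
  -- Y integrable
  have hYint : Integrable Y μ := by
    refine Integrable.mono' (integrable_const (1:ℝ)) hY.aestronglyMeasurable ?_
    filter_upwards with ω
    rcases hY01 ω with h | h <;> simp [h]
  -- sets
  set A : Set Ω := {ω | q₂ ω = 0.7} with hAdef
  set B : Set Ω := {ω | q₂ ω = 0.3} with hBdef
  have hAm0 : MeasurableSet A := hq₂ (measurableSet_singleton _)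
  have hAm : MeasurableSet[MeasurableSpace.comap q₂ inferInstance] A :=
    ⟨{(0.7:ℝ)}, measurableSet_singleton _, rfl⟩
  have hBm : MeasurableSet[MeasurableSpace.comap q₂ inferInstance] B :=
    ⟨{(0.3:ℝ)}, measurableSet_singleton _, rfl⟩
  have hBA : B = Aᶜ := by
    ext ω
    rcases hq₂vals ω with h | h <;> simp [hAdef, hBdef, h] <;> norm_num
  -- set integrals of Y
  have hYA : ∫ ω in A, Y ω ∂μ = 0.35 := by
    have h1 : ∫ ω in A, Y ω ∂μ = ∫ ω in A, q₂ ω ∂μ := by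
      rw [← setIntegral_condExp hm hYint hAm]
      exact setIntegral_congr_ae (hm A hAm) (hcond.mono fun ω h _ => h)
    have h2 : ∫ ω in A, q₂ ω ∂μ = ∫ ω in A, (0.7:ℝ) ∂μ :=
      setIntegral_congr_fun (hm A hAm) (fun ω hω => hω)
    rw [h1, h2, setIntegral_const]
    rw [Measure.real, show μ A = 1/2 from h07]
    norm_num
  have hYB : ∫ ω in B, Y ω ∂μ = 0.15 := by
    have h1 : ∫ ω in B, Y ω ∂μ = ∫ ω in B, q₂ ω ∂μ := by
      rw [← setIntegral_condExp hm hYint hBm]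
      exact setIntegral_congr_ae (hm B hBm) (hcond.mono fun ω h _ => h)
    have h2 : ∫ ω in B, q₂ ω ∂μ = ∫ ω in B, (0.3:ℝ) ∂μ :=
      setIntegral_congr_fun (hm B hBm) (fun ω hω => hω)
    rw [h1, h2, setIntegral_const]
    rw [Measure.real, show μ B = 1/2 from h03]
    norm_num
  -- integrability of the two integrands
  have hint1 : Integrable (fun ω => (q₂ ω - Y ω)^2) μ := by
    refine Integrable.mono' (integrable_const (4:ℝ))
      (((hq₂.sub hY).pow_const 2).aestronglyMeasurable) ?_
    filter_upwards with ω
    rcases hY01 ω with h | h <;> rcases hq₂vals ω with h' | h' <;>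
      rw [Real.norm_eq_abs, h, h'] <;> norm_num [abs_le]
  have hint2 : Integrable (fun ω => ((1/2 + q₂ ω)/2 - Y ω)^2) μ := by
    refine Integrable.mono' (integrable_const (4:ℝ))
      ((((measurable_const.add hq₂).div_const 2).sub hY).pow_const 2).aestronglyMeasurable ?_
    filter_upwards with ω
    rcases hY01 ω with h | h <;> rcases hq₂vals ω with h' | h' <;>
      rw [Real.norm_eq_abs, h, h'] <;> norm_num [abs_le]
  -- compute first integral = 0.21
  have hI1 : (∫ ω, (q₂ ω - Y ω)^2 ∂μ) = 0.21 := by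
    rw [← integral_add_compl hAm0 hint1, ← hBA]
    have e1 : ∫ ω in A, (q₂ ω - Y ω)^2 ∂μ = ∫ ω in A, ((0.7:ℝ) - Y ω)^2 ∂μ :=
      setIntegral_congr_fun hAm0 (fun ω hω => by rw [show q₂ ω = 0.7 from hω])
    have e2 : ∫ ω in B, (q₂ ω - Y ω)^2 ∂μ = ∫ ω in B, ((0.3:ℝ) - Y ω)^2 ∂μ :=
      setIntegral_congr_fun (hm B hBm) (fun ω hω => by rw [show q₂ ω = 0.3 from hω])
    rw [e1, e2, brier_piece μ Y hYint hY01, brier_piece μ Y hYint hY01, hYA, hYB,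
      show μ A = 1/2 from h07, show μ B = 1/2 from h03]
    norm_num
  have hI2 : (∫ ω, ((1/2 + q₂ ω)/2 - Y ω)^2 ∂μ) = 0.22 := by
    rw [← integral_add_compl hAm0 hint2, ← hBA]
    have e1 : ∫ ω in A, ((1/2 + q₂ ω)/2 - Y ω)^2 ∂μ = ∫ ω in A, ((0.6:ℝ) - Y ω)^2 ∂μ :=
      setIntegral_congr_fun hAm0 (fun ω hω => by rw [show q₂ ω = 0.7 from hω]; norm_num)
    have e2 : ∫ ω in B, ((1/2 + q₂ ω)/2 - Y ω)^2 ∂μ = ∫ ω in B, ((0.4:ℝ) - Y ω)^2 ∂μ :=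
      setIntegral_congr_fun (hm B hBm) (fun ω hω => by rw [show q₂ ω = 0.3 from hω]; norm_num)
    rw [e1, e2, brier_piece μ Y hYint hY01, brier_piece μ Y hYint hY01, hYA, hYB,
      show μ A = 1/2 from h07, show μ B = 1/2 from h03]
    norm_num
  rw [hI1, hI2]
  norm_num
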